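/- For every n, the inscribed cylinder-stack volume is at most the cone's volume π R² h / 3, which is at most the circumscribed cylinder-stack volume: V⁻(n) ≤ π R² h / 3 ≤ V⁺(n). -/

import Mathlib

open Real Finset

theorem inscribed_le_cone_le_circumscribed (h R : ℝ) (hh : 0 < h) (hR : 0 < R)
    (r : ℝ → ℝ) (hr : ∀ z, r z = R * (1 - z / h)) (n : ℕ) (hn : 0 < n) :
    (∑ k ∈ Finset.range n, π * r ((k + 1) * h / n) ^ 2 * (h / n)) ≤ π * R ^ 2 * h / 3 ∧
    π * R ^ 2 * h / 3 ≤ ∑ k ∈ Finset.range n, π * r (k * h / n) ^ 2 * (h / n) := by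
  have hn0 : (n : ℝ) ≠ 0 := Nat.cast_ne_zero.mpr hn.ne'
  have hn1 : (1 : ℝ) ≤ (n : ℝ) := Nat.one_le_cast.mpr hn
  have hπ := Real.pi_pos
  have sumsq : ∀ m : ℕ, ∑ k ∈ Finset.range m, ((k : ℝ)) ^ 2
      = (m : ℝ) * ((m : ℝ) - 1) * (2 * (m : ℝ) - 1) / 6 := by
    intro m
    induction m with
    | zero => simp
    | succ m ih => rw [Finset.sum_range_succ, ih]; push_cast; ring
  constructor
  · have e : ∑ k ∈ Finset.range n, π * r ((k + 1) * h / n) ^ 2 * (h / n)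
        = (π * R ^ 2 * h / (n : ℝ) ^ 3) * ∑ k ∈ Finset.range n, ((n : ℝ) - ((k : ℝ) + 1)) ^ 2 := by
      rw [Finset.mul_sum]
      refine Finset.sum_congr rfl fun k _ => ?_
      rw [hr]
      field_simp
    have e2 : ∑ k ∈ Finset.range n, ((n : ℝ) - ((k : ℝ) + 1)) ^ 2
        = (n : ℝ) * ((n : ℝ) - 1) * (2 * (n : ℝ) - 1) / 6 := by
      rw [← sumsq n, ← Finset.sum_range_reflect (fun j => ((j : ℝ)) ^ 2) n]
      refine Finset.sum_congr rfl fun k hk => ?_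
      have hk' := Finset.mem_range.mp hk
      have hcast : ((n - (1 + k) : ℕ) : ℝ) = (n : ℝ) - ((k : ℝ) + 1) := by
        rw [Nat.cast_sub (by omega : 1 + k ≤ n)]
        push_cast; ring
      rw [Nat.sub_sub, hcast]
    rw [e, e2]
    have hA : (n : ℝ) * ((n : ℝ) - 1) * (2 * (n : ℝ) - 1) / 6 ≤ (n : ℝ) ^ 3 / 3 := by
      nlinarith [sq_nonneg ((n : ℝ))]
    calc (π * R ^ 2 * h / (n : ℝ) ^ 3) * ((n : ℝ) * ((n : ℝ) - 1) * (2 * (n : ℝ) - 1) / 6)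
        ≤ (π * R ^ 2 * h / (n : ℝ) ^ 3) * ((n : ℝ) ^ 3 / 3) :=
          mul_le_mul_of_nonneg_left hA (by positivity)
      _ = π * R ^ 2 * h / 3 := by field_simp
  · have e : ∑ k ∈ Finset.range n, π * r (k * h / n) ^ 2 * (h / n)
        = (π * R ^ 2 * h / (n : ℝ) ^ 3) * ∑ k ∈ Finset.range n, ((n : ℝ) - (k : ℝ)) ^ 2 := by
      rw [Finset.mul_sum]
      refine Finset.sum_congr rfl fun k _ => ?_
      rw [hr]
      field_simp
    have e2 : ∑ k ∈ Finset.range n, ((n : ℝ) - (k : ℝ)) ^ 2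
        = ((n : ℝ) + 1) * (n : ℝ) * (2 * (n : ℝ) + 1) / 6 := by
      have h1 : ∑ k ∈ Finset.range n, ((n : ℝ) - (k : ℝ)) ^ 2
          = ∑ k ∈ Finset.range n, (((k : ℝ)) + 1) ^ 2 := by
        rw [← Finset.sum_range_reflect (fun j => (((j : ℝ)) + 1) ^ 2) n]
        refine Finset.sum_congr rfl fun k hk => ?_
        have hk' := Finset.mem_range.mp hk
        have hcast : ((n - (1 + k) : ℕ) : ℝ) = (n : ℝ) - ((k : ℝ) + 1) := by
          rw [Nat.cast_sub (by omega : 1 + k ≤ n)]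
          push_cast; ring
        rw [Nat.sub_sub, hcast]; ring
      have h2 := Finset.sum_range_succ' (fun k => ((k : ℝ)) ^ 2) n
      have h3 := sumsq (n + 1)
      rw [h2] at h3
      push_cast at h3
      rw [h1]
      linear_combination h3
    rw [e, e2]
    have hA : (n : ℝ) ^ 3 / 3 ≤ ((n : ℝ) + 1) * (n : ℝ) * (2 * (n : ℝ) + 1) / 6 := by
      nlinarith [sq_nonneg ((n : ℝ))]
    calc π * R ^ 2 * h / 3
        = (π * R ^ 2 * h / (n : ℝ) ^ 3) * ((n : ℝ) ^ 3 / 3) := by field_simp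
      _ ≤ (π * R ^ 2 * h / (n : ℝ) ^ 3) * (((n : ℝ) + 1) * (n : ℝ) * (2 * (n : ℝ) + 1) / 6) :=
          mul_le_mul_of_nonneg_left hA (by positivity)
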